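/- Let γ ≥ 1 and define the diagonal operator A on ℓ²(ℕ) (with ℕ = {1,2,3,…}) by (Ax)_k := (k + i k^γ + 1) x_k on the maximal domain D(A) := {x ∈ ℓ² : ((k + i k^γ + 1)x_k)_k ∈ ℓ²}. Then −A generates the C₀-semigroup given by (e^{-tA}x)_k = e^{-(k + i k^γ + 1)t} x_k, which is exponentially stable. Moreover, for every t > 0 one has e^{-tA}(ℓ²) ⊆ D(A) and ‖Ae^{-tA}‖ ≤ √5 · (γ/(e t))^γ, while limsup_{t→0+} t^γ ‖Ae^{-tA}‖ ≥ e^{-1}. Consequently (e^{-tA})_{t≥0} is in the Crandall–Pazy class with parameter β = 1/γ, but not with any parameter larger than 1/γ. -/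

import Mathlib

open Filter Topology

noncomputable section

variable {H : Type*} [NormedAddCommGroup H] [InnerProductSpace ℂ H]

/-- `T` is a strongly continuous one-parameter semigroup on `H` (written `T t = e^{-tA}`). -/
structure IsC0Semigroup (T : ℝ → H →L[ℂ] H) : Prop where
  map_zero : T 0 = 1
  map_add : ∀ s t : ℝ, 0 ≤ s → 0 ≤ t → T (s + t) = T s ∘L T t
  strong_continuity : ∀ x : H, ContinuousOn (fun t : ℝ => T t x) (Set.Ici 0)

/-- `-A` is the generator of the semigroup `T`. -/
def IsGenerator (T : ℝ → H →L[ℂ] H) (A : H →ₗ.[ℂ] H) : Prop :=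
  (∀ x : H, x ∈ A.domain ↔
      ∃ y : H, Tendsto (fun h : ℝ => (h : ℂ)⁻¹ • (T h x - x)) (𝓝[>] 0) (𝓝 y)) ∧
  ∀ x : A.domain,
    Tendsto (fun h : ℝ => (h : ℂ)⁻¹ • (T h (x : H) - (x : H))) (𝓝[>] 0) (𝓝 (-(A x)))

/-- The semigroup `T = (e^{-tA})_{t ≥ 0}` is in the Crandall–Pazy class with parameter `β`. -/
def InCrandallPazy (T : ℝ → H →L[ℂ] H) (A : H →ₗ.[ℂ] H) (β : ℝ) : Prop :=
  ∃ B : ℝ → H →L[ℂ] H,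
    (∀ t : ℝ, 0 < t → ∀ x : H, ∃ hx : T t x ∈ A.domain, B t x = A ⟨T t x, hx⟩) ∧
    ∃ M t₀ : ℝ, 0 < M ∧ 0 < t₀ ∧ ∀ t : ℝ, 0 < t → t ≤ t₀ → ‖B t‖ ≤ M * t ^ (-(1 / β))

/-- The semigroup `T` is exponentially stable. -/
def IsExpStable (T : ℝ → H →L[ℂ] H) : Prop :=
  ∃ K c : ℝ, 0 < K ∧ 0 < c ∧ ∀ t : ℝ, 0 ≤ t → ‖T t‖ ≤ K * Real.exp (-(c * t))

/-- The Hilbert space `ℓ²(ℕ)` (indexing the paper's `k ≥ 1` by `j = k - 1 ∈ ℕ`). -/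
abbrev H2 : Type := lp (fun _ : ℕ => ℂ) 2

/-- The eigenvalue `λ_k + 1 = k + i k^γ + 1` with `k = j + 1`. -/
def lamE (γ : ℝ) (j : ℕ) : ℂ :=
  (((j : ℝ) + 1 : ℝ) : ℂ) + Complex.I * ((((j : ℝ) + 1) ^ γ : ℝ) : ℂ) + 1

open scoped ENNReal

namespace CPEx



/-- key scalar bound: first order -/
lemma exp_sub_one_norm_le {lam : ℂ} (hre : 0 ≤ lam.re) {t : ℝ} (ht : 0 ≤ t) :
    ‖Complex.exp (-lam * t) - 1‖ ≤ ‖lam‖ * t := by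
  have h : ∀ s : ℝ, 0 ≤ s → ‖Complex.exp (-lam * s)‖ ≤ 1 := by
    intro s hs
    rw [Complex.norm_exp]
    have : (-lam * (s : ℂ)).re = -(lam.re * s) := by
      simp [Complex.mul_re]
    rw [this]
    exact Real.exp_le_one_iff.2 (by nlinarith)
  have hd : ∀ s ∈ Set.Icc (0:ℝ) t,
      HasDerivWithinAt (fun u : ℝ => Complex.exp (-lam * u))
        (-lam * Complex.exp (-lam * s)) (Set.Icc 0 t) s := by
    intro s _
    have h1 : HasDerivAt (fun u : ℝ => ((u : ℂ))) 1 s := by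
      simpa using (hasDerivAt_id s).ofReal_comp
    have h2 : HasDerivAt (fun u : ℝ => -lam * (u : ℂ)) (-lam) s := by
      simpa using h1.const_mul (-lam)
    have h3 := h2.cexp
    have : HasDerivAt (fun u : ℝ => Complex.exp (-lam * u))
        (-lam * Complex.exp (-lam * s)) s := by
      simpa [mul_comm] using h3
    exact this.hasDerivWithinAt
  have := Convex.norm_image_sub_le_of_norm_hasDerivWithin_le hd
    (C := ‖lam‖) (fun s hs => by
      rw [norm_mul, norm_neg]
      calc ‖lam‖ * ‖Complex.exp (-lam * s)‖ ≤ ‖lam‖ * 1 :=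
        mul_le_mul_of_nonneg_left (h s hs.1) (norm_nonneg _)
      _ = ‖lam‖ := mul_one _)
    (convex_Icc 0 t) (Set.left_mem_Icc.2 ht) (Set.right_mem_Icc.2 ht)
  simpa [abs_of_nonneg ht] using this

/-- key scalar bound: second order -/
lemma exp_sub_one_add_norm_le {lam : ℂ} (hre : 0 ≤ lam.re) {t : ℝ} (ht : 0 ≤ t) :
    ‖Complex.exp (-lam * t) - 1 + lam * t‖ ≤ ‖lam‖ ^ 2 * t ^ 2 := by
  have hd : ∀ s ∈ Set.Icc (0:ℝ) t,
      HasDerivWithinAt (fun u : ℝ => Complex.exp (-lam * u) + lam * u)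
        (-lam * Complex.exp (-lam * s) + lam) (Set.Icc 0 t) s := by
    intro s _
    have h1 : HasDerivAt (fun u : ℝ => ((u : ℂ))) 1 s := by
      simpa using (hasDerivAt_id s).ofReal_comp
    have h2 : HasDerivAt (fun u : ℝ => -lam * (u : ℂ)) (-lam) s := by
      simpa using h1.const_mul (-lam)
    have h3 : HasDerivAt (fun u : ℝ => Complex.exp (-lam * u))
        (-lam * Complex.exp (-lam * s)) s := by
      simpa [mul_comm] using h2.cexp
    have h4 : HasDerivAt (fun u : ℝ => lam * (u : ℂ)) lam s := by
      simpa using h1.const_mul lam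
    exact (h3.add h4).hasDerivWithinAt
  have hb : ∀ s ∈ Set.Icc (0:ℝ) t,
      ‖-lam * Complex.exp (-lam * s) + lam‖ ≤ ‖lam‖ ^ 2 * t := by
    intro s hs
    have : -lam * Complex.exp (-lam * s) + lam = -(lam * (Complex.exp (-lam * s) - 1)) := by
      ring
    rw [this, norm_neg, norm_mul]
    have h1 : ‖Complex.exp (-lam * s) - 1‖ ≤ ‖lam‖ * s := exp_sub_one_norm_le hre hs.1
    have h2 : ‖lam‖ * s ≤ ‖lam‖ * t := mul_le_mul_of_nonneg_left hs.2 (norm_nonneg _)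
    calc ‖lam‖ * ‖Complex.exp (-lam * s) - 1‖ ≤ ‖lam‖ * (‖lam‖ * t) :=
      mul_le_mul_of_nonneg_left (h1.trans h2) (norm_nonneg _)
    _ = ‖lam‖ ^ 2 * t := by ring
  have := Convex.norm_image_sub_le_of_norm_hasDerivWithin_le hd hb
    (convex_Icc 0 t) (Set.left_mem_Icc.2 ht) (Set.right_mem_Icc.2 ht)
  have h0 : ((0:ℝ):ℂ) = 0 := by norm_num
  calc ‖Complex.exp (-lam * t) - 1 + lam * t‖
      = ‖(Complex.exp (-lam * t) + lam * t) - (Complex.exp (-lam * (0:ℝ)) + lam * (0:ℝ))‖ := by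
        norm_num; ring_nf
    _ ≤ ‖lam‖ ^ 2 * t * ‖(t:ℝ) - 0‖ := this
    _ ≤ ‖lam‖ ^ 2 * t ^ 2 := by
        rw [sub_zero, Real.norm_of_nonneg ht]; nlinarith [norm_nonneg lam]

/-- the optimization inequality `s^γ e^{-st} ≤ (γ/(e t))^γ` -/
lemma rpow_mul_exp_le {s t γ : ℝ} (hs : 0 < s) (ht : 0 < t) (hγ : 0 < γ) :
    s ^ γ * Real.exp (-(s * t)) ≤ (γ / (Real.exp 1 * t)) ^ γ := by
  have hq : (0:ℝ) < γ / (Real.exp 1 * t) := by positivity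
  have hlog : Real.log (s * t / γ) ≤ s * t / γ - 1 :=
    Real.log_le_sub_one_of_pos (by positivity)
  have hexp : Real.log (s * t / γ) = Real.log s + Real.log t - Real.log γ := by
    rw [Real.log_div (by positivity) (ne_of_gt hγ), Real.log_mul (ne_of_gt hs) (ne_of_gt ht)]
  have hkey : Real.log s * γ + -(s * t) ≤ Real.log (γ / (Real.exp 1 * t)) * γ := by
    have hlq : Real.log (γ / (Real.exp 1 * t)) = Real.log γ - 1 - Real.log t := by
      rw [Real.log_div (ne_of_gt hγ) (by positivity), Real.log_mul
        (ne_of_gt (Real.exp_pos 1)) (ne_of_gt ht), Real.log_exp]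
      ring
    rw [hlq]
    have := mul_le_mul_of_nonneg_left (hexp ▸ hlog) (le_of_lt hγ)
    have hd : γ * (s * t / γ - 1) = s * t - γ := by field_simp
    nlinarith
  calc s ^ γ * Real.exp (-(s * t))
      = Real.exp (Real.log s * γ + -(s * t)) := by
        rw [Real.exp_add, Real.rpow_def_of_pos hs]
    _ ≤ Real.exp (Real.log (γ / (Real.exp 1 * t)) * γ) := Real.exp_le_exp.2 hkey
    _ = (γ / (Real.exp 1 * t)) ^ γ := (Real.rpow_def_of_pos hq γ).symm



lemma two_toReal : ((2:ℝ≥0∞)).toReal = (2:ℝ) := by norm_num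

lemma summable_sq (x : H2) : Summable (fun j => ‖(x:∀ _:ℕ, ℂ) j‖ ^ (2:ℝ)) := by
  have := (lp.memℓp x).summable (p := 2) (by norm_num)
  simpa [two_toReal] using this

lemma norm_sq_eq (x : H2) : ‖x‖ ^ (2:ℝ) = ∑' j, ‖(x:∀ _:ℕ, ℂ) j‖ ^ (2:ℝ) := by
  have := lp.norm_rpow_eq_tsum (p := 2) (by norm_num) x
  simpa [two_toReal] using this

/-- comparison bound for the lp-norm -/
lemma norm_le_of_forall_norm_le {y x : H2} {C : ℝ} (hC : 0 ≤ C)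
    (h : ∀ j, ‖(y:∀ _:ℕ, ℂ) j‖ ≤ C * ‖(x:∀ _:ℕ, ℂ) j‖) : ‖y‖ ≤ C * ‖x‖ := by
  refine lp.norm_le_of_tsum_le (p := 2) (by norm_num) (by positivity) ?_
  rw [two_toReal]
  have hsum : ∑' j, ‖(y:∀ _:ℕ, ℂ) j‖ ^ (2:ℝ) ≤ ∑' j, C^2 * ‖(x:∀ _:ℕ, ℂ) j‖ ^ (2:ℝ) := by
    refine Summable.tsum_le_tsum (fun j => ?_) (summable_sq y) ((summable_sq x).mul_left _)
    have h1 : ‖(y:∀ _:ℕ, ℂ) j‖ ^ (2:ℝ) ≤ (C * ‖(x:∀ _:ℕ, ℂ) j‖) ^ (2:ℝ) :=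
      Real.rpow_le_rpow (norm_nonneg _) (h j) (by norm_num)
    calc ‖(y:∀ _:ℕ, ℂ) j‖ ^ (2:ℝ) ≤ (C * ‖(x:∀ _:ℕ, ℂ) j‖) ^ (2:ℝ) := h1
      _ = C^2 * ‖(x:∀ _:ℕ, ℂ) j‖ ^ (2:ℝ) := by
          rw [Real.mul_rpow hC (norm_nonneg _)]
          norm_num [Real.rpow_two]
    
  calc ∑' j, ‖(y:∀ _:ℕ, ℂ) j‖ ^ (2:ℝ) ≤ C^2 * ∑' j, ‖(x:∀ _:ℕ, ℂ) j‖ ^ (2:ℝ) := by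
        rw [← tsum_mul_left] at *; exact hsum
    _ = (C * ‖x‖) ^ (2:ℝ) := by
        rw [← norm_sq_eq, Real.mul_rpow hC (norm_nonneg _)]
        norm_num [Real.rpow_two]

lemma memℓp_two_mul {a : ℕ → ℂ} {C : ℝ} (ha : ∀ j, ‖a j‖ ≤ C) (x : H2) :
    Memℓp (fun j => a j * (x:∀ _:ℕ, ℂ) j) 2 := by
  have hC : 0 ≤ C := le_trans (norm_nonneg _) (ha 0)
  refine memℓp_gen ?_
  rw [two_toReal]
  refine Summable.of_nonneg_of_le (fun j => by positivity) (fun j => ?_)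
    ((summable_sq x).mul_left (C^2))
  rw [norm_mul, Real.mul_rpow (norm_nonneg _) (norm_nonneg _)]
  have := Real.rpow_le_rpow (norm_nonneg (a j)) (ha j) (by norm_num : (0:ℝ) ≤ 2)
  have hx0 : (0:ℝ) ≤ ‖(x:∀ _:ℕ, ℂ) j‖ ^ (2:ℝ) := Real.rpow_nonneg (norm_nonneg _) _
  calc ‖a j‖ ^ (2:ℝ) * ‖(x:∀ _:ℕ, ℂ) j‖ ^ (2:ℝ) ≤ C ^ (2:ℝ) * ‖(x:∀ _:ℕ, ℂ) j‖ ^ (2:ℝ) :=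
        mul_le_mul_of_nonneg_right this hx0
    _ = C ^ 2 * ‖(x:∀ _:ℕ, ℂ) j‖ ^ (2:ℝ) := by rw [Real.rpow_two]

/-- multiplication operator by a bounded sequence -/
def mulOp (a : ℕ → ℂ) (C : ℝ) (ha : ∀ j, ‖a j‖ ≤ C) : H2 →L[ℂ] H2 :=
  LinearMap.mkContinuous
    { toFun := fun x => (⟨fun j => a j * (x:∀ _:ℕ, ℂ) j, memℓp_two_mul ha x⟩ : H2)
      map_add' := by
        intro x y
        apply lp.ext
        funext j
        simp [lp.coeFn_add, mul_add]
        rfl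
      map_smul' := by
        intro c x
        apply lp.ext
        funext j
        simp [lp.coeFn_smul, Pi.smul_apply, smul_eq_mul]
        ring }
    C
    (fun x => by
      have hC : 0 ≤ C := le_trans (norm_nonneg _) (ha 0)
      refine norm_le_of_forall_norm_le hC (fun j => ?_)
      simp only [LinearMap.coe_mk, AddHom.coe_mk]
      rw [norm_mul]
      exact mul_le_mul_of_nonneg_right (ha j) (norm_nonneg _))

@[simp] lemma mulOp_apply (a : ℕ → ℂ) (C : ℝ) (ha : ∀ j, ‖a j‖ ≤ C) (x : H2) (j : ℕ) :
    ((mulOp a C ha x : H2) : ∀ _:ℕ, ℂ) j = a j * (x:∀ _:ℕ, ℂ) j := rfl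

lemma mulOp_norm_le (a : ℕ → ℂ) (C : ℝ) (ha : ∀ j, ‖a j‖ ≤ C) {D : ℝ} (hD : 0 ≤ D)
    (haD : ∀ j, ‖a j‖ ≤ D) : ‖mulOp a C ha‖ ≤ D := by
  refine ContinuousLinearMap.opNorm_le_bound _ hD (fun x => ?_)
  refine norm_le_of_forall_norm_le hD (fun j => ?_)
  rw [mulOp_apply, norm_mul]
  exact mul_le_mul_of_nonneg_right (haD j) (norm_nonneg _)

lemma le_mulOp_norm (a : ℕ → ℂ) (C : ℝ) (ha : ∀ j, ‖a j‖ ≤ C) (j : ℕ) :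
    ‖a j‖ ≤ ‖mulOp a C ha‖ := by
  have h1 : ‖(lp.single 2 j 1 : H2)‖ = 1 := by
    have := lp.norm_single (E := fun _ : ℕ => ℂ) (p := 2) (by norm_num) j (1:ℂ)
    simpa using this
  have h2 : ‖mulOp a C ha ((lp.single 2 j 1 : H2))‖ ≤ ‖mulOp a C ha‖ := by
    calc ‖mulOp a C ha ((lp.single 2 j 1 : H2))‖ ≤ ‖mulOp a C ha‖ * ‖(lp.single 2 j 1 : H2)‖ :=
          (mulOp a C ha).le_opNorm _
      _ = ‖mulOp a C ha‖ := by rw [h1, mul_one]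
  refine le_trans ?_ ((lp.norm_apply_le_norm (p := 2) (by norm_num)
    (mulOp a C ha ((lp.single 2 j 1 : H2))) j).trans h2)
  rw [mulOp_apply]
  rw [lp.single_apply_self]
  simp

/-- dominated convergence in `ℓ²` -/
lemma dct_lp {ι : Type*} {l : Filter ι} {u : ι → H2} {v : H2} {g : ℕ → ℂ}
    (hg : Memℓp g 2)
    (hbd : ∀ᶠ i in l, ∀ j, ‖(u i :∀ _:ℕ, ℂ) j - (v:∀ _:ℕ, ℂ) j‖ ≤ ‖g j‖)
    (hpt : ∀ j, Tendsto (fun i => (u i :∀ _:ℕ, ℂ) j) l (𝓝 ((v:∀ _:ℕ, ℂ) j))) :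
    Tendsto u l (𝓝 v) := by
  rw [tendsto_iff_norm_sub_tendsto_zero]
  have hsum : Summable (fun j => ‖g j‖ ^ (2:ℝ)) := by
    have := hg.summable (p := 2) (by norm_num)
    simpa [two_toReal] using this
  have key : Tendsto (fun i => ∑' j, ‖(u i :∀ _:ℕ, ℂ) j - (v:∀ _:ℕ, ℂ) j‖ ^ (2:ℝ)) l
      (𝓝 (∑' _ : ℕ, (0:ℝ))) := by
    refine tendsto_tsum_of_dominated_convergence hsum (fun j => ?_) ?_
    · have h0 : Tendsto (fun i => ‖(u i :∀ _:ℕ, ℂ) j - (v:∀ _:ℕ, ℂ) j‖) l (𝓝 0) := by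
        exact tendsto_iff_norm_sub_tendsto_zero.1 (hpt j)
      have := h0.rpow_const (p := 2) (Or.inr (by norm_num))
      simpa [Real.zero_rpow] using this
    · filter_upwards [hbd] with i hi j
      rw [Real.norm_of_nonneg (Real.rpow_nonneg (norm_nonneg _) _)]
      exact Real.rpow_le_rpow (norm_nonneg _) (hi j) (by norm_num)
  rw [tsum_zero] at key
  have heq : ∀ i, ‖u i - v‖ = Real.sqrt (∑' j, ‖(u i :∀ _:ℕ, ℂ) j - (v:∀ _:ℕ, ℂ) j‖ ^ (2:ℝ)) := by
    intro i
    have h1 : ∑' j, ‖(u i :∀ _:ℕ, ℂ) j - (v:∀ _:ℕ, ℂ) j‖ ^ (2:ℝ) = ‖u i - v‖ ^ (2:ℝ) := by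
      rw [norm_sq_eq (u i - v)]
      apply tsum_congr
      intro j
      simp [lp.coeFn_sub]
    rw [h1, Real.rpow_two, Real.sqrt_sq (norm_nonneg _)]
  simp only [heq]
  have := key.sqrt
  simpa using this



lemma lamE_re (γ : ℝ) (j : ℕ) : (lamE γ j).re = (j:ℝ) + 2 := by
  simp [lamE]; ring

lemma lamE_im (γ : ℝ) (j : ℕ) : (lamE γ j).im = ((j:ℝ) + 1) ^ γ := by
  simp [lamE]

lemma lamE_re_nonneg (γ : ℝ) (j : ℕ) : 0 ≤ (lamE γ j).re := by
  rw [lamE_re]; positivity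

lemma exp_norm (γ : ℝ) (j : ℕ) (t : ℝ) :
    ‖Complex.exp (-lamE γ j * t)‖ = Real.exp (-(((j:ℝ) + 2) * t)) := by
  rw [Complex.norm_exp]
  congr 1
  simp [Complex.mul_re, lamE_re]

lemma one_le_base (j : ℕ) : (1:ℝ) ≤ (j:ℝ) + 1 := by
  have : (0:ℝ) ≤ (j:ℝ) := Nat.cast_nonneg j
  linarith

lemma base_le_rpow {γ : ℝ} (hγ : 1 ≤ γ) (j : ℕ) : (j:ℝ) + 1 ≤ ((j:ℝ) + 1) ^ γ := by
  have := Real.rpow_le_rpow_of_exponent_le (one_le_base j) hγ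
  simpa using this

lemma rpow_base_pos (γ : ℝ) (j : ℕ) : 0 < ((j:ℝ) + 1) ^ γ :=
  Real.rpow_pos_of_pos (by positivity) _

lemma norm_lamE_le {γ : ℝ} (hγ : 1 ≤ γ) (j : ℕ) :
    ‖lamE γ j‖ ≤ Real.sqrt 5 * ((j:ℝ) + 1) ^ γ := by
  have h1 : ‖lamE γ j‖ = Real.sqrt (((j:ℝ)+2)^2 + (((j:ℝ)+1)^γ)^2) := by
    rw [Complex.norm_def, Complex.normSq_apply, lamE_re, lamE_im]
    ring_nf
  rw [h1]
  have h2 : ((j:ℝ)+2)^2 + (((j:ℝ)+1)^γ)^2 ≤ 5 * (((j:ℝ)+1)^γ)^2 := by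
    have hb := base_le_rpow hγ j
    nlinarith [rpow_base_pos γ j, one_le_base j]
  calc Real.sqrt (((j:ℝ)+2)^2 + (((j:ℝ)+1)^γ)^2) ≤ Real.sqrt (5 * (((j:ℝ)+1)^γ)^2) :=
        Real.sqrt_le_sqrt h2
    _ = Real.sqrt 5 * ((j:ℝ)+1)^γ := by
        rw [Real.sqrt_mul (by norm_num), Real.sqrt_sq (le_of_lt (rpow_base_pos γ j))]

lemma le_norm_lamE (γ : ℝ) (j : ℕ) : ((j:ℝ) + 1) ^ γ ≤ ‖lamE γ j‖ := by
  have := Complex.abs_im_le_norm (lamE γ j)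
  rw [lamE_im] at this
  exact le_trans (le_abs_self _) this

/-- multiplier of the semigroup -/
def Tmul (γ t : ℝ) : ℕ → ℂ := fun j => Complex.exp (-lamE γ j * (max t 0 : ℝ))

lemma Tmul_norm (γ t : ℝ) (j : ℕ) :
    ‖Tmul γ t j‖ = Real.exp (-(((j:ℝ) + 2) * max t 0)) := exp_norm γ j _

lemma Tmul_bound (γ t : ℝ) (j : ℕ) : ‖Tmul γ t j‖ ≤ 1 := by
  rw [Tmul_norm]
  refine Real.exp_le_one_iff.2 ?_
  have : (0:ℝ) ≤ ((j:ℝ)+2) * max t 0 := by positivity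
  linarith

/-- the semigroup -/
def Tsg (γ : ℝ) (t : ℝ) : H2 →L[ℂ] H2 := mulOp (Tmul γ t) 1 (Tmul_bound γ t)

lemma Tsg_apply (γ t : ℝ) (x : H2) (j : ℕ) :
    ((Tsg γ t x : H2) : ∀ _:ℕ, ℂ) j = Complex.exp (-lamE γ j * (max t 0 : ℝ)) * (x:∀ _:ℕ, ℂ) j :=
  rfl

lemma Tsg_apply_of_nonneg (γ : ℝ) {t : ℝ} (ht : 0 ≤ t) (x : H2) (j : ℕ) :
    ((Tsg γ t x : H2) : ∀ _:ℕ, ℂ) j = Complex.exp (-lamE γ j * t) * (x:∀ _:ℕ, ℂ) j := by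
  rw [Tsg_apply, max_eq_left ht]

lemma Tsg_zero (γ : ℝ) : Tsg γ 0 = 1 := by
  refine ContinuousLinearMap.ext (fun x => ?_)
  apply lp.ext
  funext j
  rw [ContinuousLinearMap.one_apply, Tsg_apply]
  simp

lemma Tsg_add (γ : ℝ) (s t : ℝ) (hs : 0 ≤ s) (ht : 0 ≤ t) :
    Tsg γ (s + t) = Tsg γ s ∘L Tsg γ t := by
  refine ContinuousLinearMap.ext (fun x => ?_)
  apply lp.ext
  funext j
  rw [ContinuousLinearMap.comp_apply, Tsg_apply_of_nonneg γ (by linarith) x j,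
    Tsg_apply_of_nonneg γ hs _ j, Tsg_apply_of_nonneg γ ht x j]
  rw [← mul_assoc, ← Complex.exp_add]
  congr 2
  push_cast
  ring

lemma Tsg_continuity (γ : ℝ) (x : H2) :
    ContinuousOn (fun t : ℝ => Tsg γ t x) (Set.Ici 0) := by
  intro t₀ _
  refine dct_lp (g := fun j => 2 * (x:∀ _:ℕ, ℂ) j) ((lp.memℓp x).const_mul 2) ?_ ?_
  · refine Eventually.of_forall (fun t => fun j => ?_)
    rw [Tsg_apply, Tsg_apply]
    calc ‖Complex.exp (-lamE γ j * (max t 0 : ℝ)) * (x:∀ _:ℕ, ℂ) j -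
          Complex.exp (-lamE γ j * (max t₀ 0 : ℝ)) * (x:∀ _:ℕ, ℂ) j‖
        = ‖Complex.exp (-lamE γ j * (max t 0 : ℝ)) -
            Complex.exp (-lamE γ j * (max t₀ 0 : ℝ))‖ * ‖(x:∀ _:ℕ, ℂ) j‖ := by
          rw [← norm_mul]; congr 1; ring
      _ ≤ 2 * ‖(x:∀ _:ℕ, ℂ) j‖ := by
          refine mul_le_mul_of_nonneg_right ?_ (norm_nonneg _)
          calc ‖Complex.exp (-lamE γ j * (max t 0 : ℝ)) -
              Complex.exp (-lamE γ j * (max t₀ 0 : ℝ))‖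
              ≤ ‖Complex.exp (-lamE γ j * (max t 0 : ℝ))‖ +
                ‖Complex.exp (-lamE γ j * (max t₀ 0 : ℝ))‖ := norm_sub_le _ _
            _ ≤ 2 := by
              have h1 := Tmul_bound γ t j
              have h2 := Tmul_bound γ t₀ j
              rw [Tmul] at h1 h2
              linarith
      _ = ‖(2:ℂ) * (x:∀ _:ℕ, ℂ) j‖ := by rw [norm_mul]; norm_num
  · intro j
    simp only [Tsg_apply]
    have hc : Continuous (fun t : ℝ => Complex.exp (-lamE γ j * (max t 0 : ℝ)) * (x:∀ _:ℕ, ℂ) j) := by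
      refine Continuous.mul ?_ continuous_const
      exact Complex.continuous_exp.comp
        (continuous_const.mul (Complex.continuous_ofReal.comp (continuous_id.max continuous_const)))
    exact (hc.tendsto t₀).mono_left nhdsWithin_le_nhds

lemma Tsg_norm_le (γ : ℝ) {t : ℝ} (ht : 0 ≤ t) : ‖Tsg γ t‖ ≤ Real.exp (-t) := by
  refine mulOp_norm_le _ _ _ (le_of_lt (Real.exp_pos _)) (fun j => ?_)
  rw [Tmul_norm, max_eq_left ht]
  refine Real.exp_le_exp.2 ?_
  have hj : (0:ℝ) ≤ (j:ℝ) := Nat.cast_nonneg j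
  have : t ≤ ((j:ℝ)+2) * t := by nlinarith
  linarith

lemma Tsg_expStable (γ : ℝ) :
    ∃ K c : ℝ, 0 < K ∧ 0 < c ∧ ∀ t : ℝ, 0 ≤ t → ‖Tsg γ t‖ ≤ K * Real.exp (-(c * t)) := by
  exact ⟨1, 1, one_pos, one_pos, fun t ht => by
    simp only [one_mul]; exact Tsg_norm_le γ ht⟩



/-! ### scalar difference-quotient bounds -/

lemma heq_aux {lam : ℂ} {h : ℝ} (hh : 0 < h) (c : ℂ) :
    (h:ℂ)⁻¹ * (Complex.exp (-lam * h) * c - c) - (-(lam * c)) =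
      ((h:ℂ)⁻¹ * (Complex.exp (-lam * h) - 1 + lam * h)) * c := by
  have h0 : (h:ℂ) ≠ 0 := by
    simpa using ne_of_gt hh
  field_simp
  ring

lemma scalar_bound {lam : ℂ} (hre : 0 ≤ lam.re) {h : ℝ} (hh : 0 < h) (c : ℂ) :
    ‖(h:ℂ)⁻¹ * (Complex.exp (-lam * h) * c - c) - (-(lam * c))‖ ≤ (‖lam‖^2 * h) * ‖c‖ := by
  rw [heq_aux hh c, norm_mul, norm_mul]
  have hn : ‖((h:ℝ):ℂ)⁻¹‖ = h⁻¹ := by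
    rw [norm_inv, Complex.norm_real, Real.norm_of_nonneg hh.le]
  rw [hn]
  refine mul_le_mul_of_nonneg_right ?_ (norm_nonneg _)
  have hb := exp_sub_one_add_norm_le hre hh.le
  calc h⁻¹ * ‖Complex.exp (-lam * h) - 1 + lam * h‖ ≤ h⁻¹ * (‖lam‖^2 * h^2) :=
        mul_le_mul_of_nonneg_left hb (by positivity)
    _ = ‖lam‖^2 * h := by field_simp

lemma scalar_bound2 {lam : ℂ} (hre : 0 ≤ lam.re) {h : ℝ} (hh : 0 < h) (c : ℂ) :
    ‖(h:ℂ)⁻¹ * (Complex.exp (-lam * h) * c - c) - (-(lam * c))‖ ≤ ‖2 * (lam * c)‖ := by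
  rw [heq_aux hh c, norm_mul]
  have hsplit : (h:ℂ)⁻¹ * (Complex.exp (-lam * h) - 1 + lam * h) =
      (h:ℂ)⁻¹ * (Complex.exp (-lam * h) - 1) + lam := by
    have h0 : (h:ℂ) ≠ 0 := by simpa using ne_of_gt hh
    field_simp
  have hn : ‖((h:ℝ):ℂ)⁻¹‖ = h⁻¹ := by
    rw [norm_inv, Complex.norm_real, Real.norm_of_nonneg hh.le]
  have h1 : ‖(h:ℂ)⁻¹ * (Complex.exp (-lam * h) - 1)‖ ≤ ‖lam‖ := by
    rw [norm_mul, hn]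
    have := exp_sub_one_norm_le hre hh.le
    calc h⁻¹ * ‖Complex.exp (-lam * h) - 1‖ ≤ h⁻¹ * (‖lam‖ * h) :=
          mul_le_mul_of_nonneg_left this (by positivity)
      _ = ‖lam‖ := by field_simp
  calc ‖(h:ℂ)⁻¹ * (Complex.exp (-lam * h) - 1 + lam * h)‖ * ‖c‖
      ≤ (‖(h:ℂ)⁻¹ * (Complex.exp (-lam * h) - 1)‖ + ‖lam‖) * ‖c‖ := by
        refine mul_le_mul_of_nonneg_right ?_ (norm_nonneg _)
        rw [hsplit]
        exact norm_add_le _ _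
    _ ≤ (‖lam‖ + ‖lam‖) * ‖c‖ := by
        refine mul_le_mul_of_nonneg_right (by linarith) (norm_nonneg _)
    _ = ‖2 * (lam * c)‖ := by
        rw [norm_mul, norm_mul]
        norm_num
        ring

/-! ### the operator A -/

def domSub (γ : ℝ) : Submodule ℂ H2 where
  carrier := {x : H2 | Memℓp (fun j => lamE γ j * (x:∀ _:ℕ, ℂ) j) 2}
  add_mem' := by
    intro x y hx hy
    have h2 : (fun j => lamE γ j * ((x + y : H2):∀ _:ℕ, ℂ) j) =
        (fun j => lamE γ j * (x:∀ _:ℕ, ℂ) j) + (fun j => lamE γ j * (y:∀ _:ℕ, ℂ) j) := by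
      funext j
      simp [lp.coeFn_add, mul_add]
    simpa only [Set.mem_setOf_eq, h2] using hx.add hy
  zero_mem' := by
    have h2 : (fun j => lamE γ j * ((0 : H2):∀ _:ℕ, ℂ) j) = (fun _ : ℕ => (0:ℂ)) := by
      funext j
      simp [lp.coeFn_zero]
    simpa only [Set.mem_setOf_eq, h2] using (show Memℓp (fun _ : ℕ => (0:ℂ)) 2 from zero_memℓp (E := fun _ : ℕ => ℂ) (p := 2))
  smul_mem' := by
    intro c x hx
    have h2 : (fun j => lamE γ j * ((c • x : H2):∀ _:ℕ, ℂ) j) =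
        (fun j => c * (lamE γ j * (x:∀ _:ℕ, ℂ) j)) := by
      funext j
      simp [lp.coeFn_smul, Pi.smul_apply, smul_eq_mul]
      ring
    simpa only [Set.mem_setOf_eq, h2] using Memℓp.const_mul hx c

def Aop (γ : ℝ) : H2 →ₗ.[ℂ] H2 :=
  ⟨domSub γ,
    { toFun := fun x => (⟨fun j => lamE γ j * ((x : H2):∀ _:ℕ, ℂ) j, x.2⟩ : H2)
      map_add' := by
        intro x y
        apply lp.ext
        funext j
        simp [lp.coeFn_add, mul_add]
        rfl
      map_smul' := by
        intro c x
        apply lp.ext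
        funext j
        simp [lp.coeFn_smul, Pi.smul_apply, smul_eq_mul]
        ring }⟩

lemma Aop_domain (γ : ℝ) : (Aop γ).domain = domSub γ := rfl

lemma mem_Aop_domain_iff (γ : ℝ) (x : H2) :
    x ∈ (Aop γ).domain ↔ Memℓp (fun j => lamE γ j * (x:∀ _:ℕ, ℂ) j) 2 := Iff.rfl

lemma Aop_apply (γ : ℝ) (x : (Aop γ).domain) (j : ℕ) :
    ((Aop γ x : H2) : ∀ _:ℕ, ℂ) j = lamE γ j * ((x : H2):∀ _:ℕ, ℂ) j := rfl

/-! ### coordinates of the difference quotient -/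

lemma u_coord (γ : ℝ) (h : ℝ) (x : H2) (j : ℕ) :
    ((((h:ℂ)⁻¹ • (Tsg γ h x - x)) : H2) : ∀ _:ℕ, ℂ) j =
      (h:ℂ)⁻¹ * (Complex.exp (-lamE γ j * (max h 0 : ℝ)) * (x:∀ _:ℕ, ℂ) j - (x:∀ _:ℕ, ℂ) j) := by
  rw [lp.coeFn_smul, Pi.smul_apply, smul_eq_mul, lp.coeFn_sub, Pi.sub_apply, Tsg_apply]

lemma tendsto_coord {ι : Type*} {l : Filter ι} {u : ι → H2} {v : H2}
    (h : Tendsto u l (𝓝 v)) (j : ℕ) :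
    Tendsto (fun i => (u i : ∀ _:ℕ, ℂ) j) l (𝓝 ((v : ∀ _:ℕ, ℂ) j)) := by
  rw [tendsto_iff_norm_sub_tendsto_zero]
  refine squeeze_zero (fun i => norm_nonneg _) (fun i => ?_)
    (tendsto_iff_norm_sub_tendsto_zero.1 h)
  have := lp.norm_apply_le_norm (p := 2) (by norm_num) (u i - v) j
  simpa [lp.coeFn_sub] using this

lemma coord_tendsto (γ : ℝ) (x : H2) (j : ℕ) :
    Tendsto (fun h : ℝ => ((((h:ℂ)⁻¹ • (Tsg γ h x - x)) : H2) : ∀ _:ℕ, ℂ) j)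
      (𝓝[>] (0:ℝ)) (𝓝 (-(lamE γ j * (x:∀ _:ℕ, ℂ) j))) := by
  rw [tendsto_iff_norm_sub_tendsto_zero]
  refine squeeze_zero' (g := fun h : ℝ => (‖lamE γ j‖^2 * h) * ‖(x:∀ _:ℕ, ℂ) j‖)
    (Eventually.of_forall (fun h => norm_nonneg _)) ?_ ?_
  · filter_upwards [self_mem_nhdsWithin] with h hh
    have hh' : (0:ℝ) < h := hh
    rw [u_coord, max_eq_left hh'.le]
    exact scalar_bound (lamE_re_nonneg γ j) hh' _
  · have hc : Continuous (fun h : ℝ => (‖lamE γ j‖^2 * h) * ‖(x:∀ _:ℕ, ℂ) j‖) := by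
      continuity
    have := (hc.tendsto 0).mono_left (nhdsWithin_le_nhds (s := Set.Ioi (0:ℝ)))
    simpa using this

lemma gen_tendsto (γ : ℝ) (x : H2) (hx : Memℓp (fun j => lamE γ j * (x:∀ _:ℕ, ℂ) j) 2) :
    Tendsto (fun h : ℝ => (h:ℂ)⁻¹ • (Tsg γ h x - x)) (𝓝[>] (0:ℝ))
      (𝓝 (-(⟨fun j => lamE γ j * (x:∀ _:ℕ, ℂ) j, hx⟩ : H2))) := by
  set v : H2 := -(⟨fun j => lamE γ j * (x:∀ _:ℕ, ℂ) j, hx⟩ : H2) with hv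
  have hvj : ∀ j, (v : ∀ _:ℕ, ℂ) j = -(lamE γ j * (x:∀ _:ℕ, ℂ) j) := by
    intro j
    rw [hv, lp.coeFn_neg, Pi.neg_apply]
  refine dct_lp (g := fun j => 2 * (lamE γ j * (x:∀ _:ℕ, ℂ) j)) (hx.const_mul 2) ?_ ?_
  · filter_upwards [self_mem_nhdsWithin] with h hh
    intro j
    have hh' : (0:ℝ) < h := hh
    rw [u_coord, max_eq_left hh'.le, hvj j]
    exact scalar_bound2 (lamE_re_nonneg γ j) hh' _
  · intro j
    rw [hvj j]
    exact coord_tendsto γ x j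

lemma isGen (γ : ℝ) :
    (∀ x : H2, x ∈ (Aop γ).domain ↔
      ∃ y : H2, Tendsto (fun h : ℝ => (h : ℂ)⁻¹ • (Tsg γ h x - x)) (𝓝[>] 0) (𝓝 y)) ∧
    ∀ x : (Aop γ).domain,
      Tendsto (fun h : ℝ => (h : ℂ)⁻¹ • (Tsg γ h (x : H2) - (x : H2))) (𝓝[>] 0)
        (𝓝 (-(Aop γ x))) := by
  constructor
  · intro x
    constructor
    · intro hx
      exact ⟨-(⟨fun j => lamE γ j * (x:∀ _:ℕ, ℂ) j, hx⟩ : H2), gen_tendsto γ x hx⟩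
    · rintro ⟨y, hy⟩
      have hyj : ∀ j, (y : ∀ _:ℕ, ℂ) j = -(lamE γ j * (x:∀ _:ℕ, ℂ) j) := by
        intro j
        exact tendsto_nhds_unique (tendsto_coord hy j) (coord_tendsto γ x j)
      rw [mem_Aop_domain_iff]
      have h2 : (fun j => lamE γ j * (x:∀ _:ℕ, ℂ) j) = -(y : ∀ _:ℕ, ℂ) := by
        funext j
        rw [Pi.neg_apply, hyj j, neg_neg]
      rw [h2]
      exact (lp.memℓp y).neg
  · intro x
    exact gen_tendsto γ (x : H2) x.2



/-! ### the operator B -/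

def Bmul (γ t : ℝ) : ℕ → ℂ := fun j => lamE γ j * Complex.exp (-lamE γ j * t)

lemma Bmul_norm (γ t : ℝ) (j : ℕ) :
    ‖Bmul γ t j‖ = ‖lamE γ j‖ * Real.exp (-(((j:ℝ) + 2) * t)) := by
  rw [Bmul, norm_mul, exp_norm]

lemma Bmul_bound {γ : ℝ} (hγ : 1 ≤ γ) {t : ℝ} (ht : 0 < t) (j : ℕ) :
    ‖Bmul γ t j‖ ≤ Real.sqrt 5 * (γ / (Real.exp 1 * t)) ^ γ := by
  have hγ0 : 0 < γ := lt_of_lt_of_le one_pos hγ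
  rw [Bmul_norm]
  have h1 : ‖lamE γ j‖ * Real.exp (-(((j:ℝ) + 2) * t)) ≤
      (Real.sqrt 5 * ((j:ℝ) + 1) ^ γ) * Real.exp (-((((j:ℝ) + 1)) * t)) := by
    refine mul_le_mul (norm_lamE_le hγ j) (Real.exp_le_exp.2 ?_) (le_of_lt (Real.exp_pos _))
      (by positivity)
    nlinarith [Nat.cast_nonneg (α := ℝ) j]
  refine h1.trans ?_
  rw [mul_assoc]
  refine mul_le_mul_of_nonneg_left ?_ (Real.sqrt_nonneg 5)
  exact rpow_mul_exp_le (by positivity) ht hγ0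

def Bop (γ : ℝ) (hγ : 1 ≤ γ) (t : ℝ) : H2 →L[ℂ] H2 :=
  if ht : 0 < t then mulOp (Bmul γ t) _ (Bmul_bound hγ ht) else 0

lemma Bop_pos (γ : ℝ) (hγ : 1 ≤ γ) {t : ℝ} (ht : 0 < t) :
    Bop γ hγ t = mulOp (Bmul γ t) _ (Bmul_bound hγ ht) := dif_pos ht

lemma Bop_norm_le (γ : ℝ) (hγ : 1 ≤ γ) {t : ℝ} (ht : 0 < t) :
    ‖Bop γ hγ t‖ ≤ Real.sqrt 5 * (γ / (Real.exp 1 * t)) ^ γ := by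
  have hγ0 : 0 < γ := lt_of_lt_of_le one_pos hγ
  have hq : (0:ℝ) < γ / (Real.exp 1 * t) := by positivity
  rw [Bop_pos γ hγ ht]
  exact mulOp_norm_le _ _ _ (by have := Real.rpow_pos_of_pos hq γ; positivity) (Bmul_bound hγ ht)

lemma le_Bop_norm (γ : ℝ) (hγ : 1 ≤ γ) {t : ℝ} (ht : 0 < t) (j : ℕ) :
    ((j:ℝ) + 1) ^ γ * Real.exp (-(((j:ℝ) + 2) * t)) ≤ ‖Bop γ hγ t‖ := by
  rw [Bop_pos γ hγ ht]
  refine le_trans ?_ (le_mulOp_norm (Bmul γ t) _ (Bmul_bound hγ ht) j)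
  rw [Bmul_norm]
  exact mul_le_mul_of_nonneg_right (le_norm_lamE γ j) (le_of_lt (Real.exp_pos _))

lemma Tsg_mem_domain {γ : ℝ} (hγ : 1 ≤ γ) {t : ℝ} (ht : 0 < t) (x : H2) :
    Tsg γ t x ∈ (Aop γ).domain := by
  rw [mem_Aop_domain_iff]
  have h2 : (fun j => lamE γ j * ((Tsg γ t x : H2) : ∀ _:ℕ, ℂ) j) =
      (fun j => Bmul γ t j * (x:∀ _:ℕ, ℂ) j) := by
    funext j
    rw [Tsg_apply_of_nonneg γ ht.le, Bmul, mul_assoc]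
  rw [h2]
  exact memℓp_two_mul (Bmul_bound hγ ht) x

lemma Bop_eq_Aop {γ : ℝ} (hγ : 1 ≤ γ) {t : ℝ} (ht : 0 < t) (x : H2) :
    Bop γ hγ t x = Aop γ ⟨Tsg γ t x, Tsg_mem_domain hγ ht x⟩ := by
  apply lp.ext
  funext j
  rw [Bop_pos γ hγ ht]
  rw [mulOp_apply]
  rw [Aop_apply]
  show Bmul γ t j * (x:∀ _:ℕ, ℂ) j = lamE γ j * ((Tsg γ t x : H2) : ∀ _:ℕ, ℂ) j
  rw [Tsg_apply_of_nonneg γ ht.le, Bmul, mul_assoc]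

lemma bound_rewrite {γ : ℝ} (hγ0 : 0 < γ) {t : ℝ} (ht : 0 < t) :
    (γ / (Real.exp 1 * t)) ^ γ = (γ / Real.exp 1) ^ γ * t ^ (-γ) := by
  have h1 : γ / (Real.exp 1 * t) = (γ / Real.exp 1) / t := by
    field_simp
  rw [h1, Real.div_rpow (by positivity) ht.le, Real.rpow_neg ht.le, div_eq_mul_inv]

/-! ### the limsup lower bound -/

lemma tsgBound (γ : ℝ) (hγ : 1 ≤ γ) {t : ℝ} (ht : 0 < t) :
    t ^ γ * ‖Bop γ hγ t‖ ≤ Real.sqrt 5 * (γ / Real.exp 1) ^ γ := by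
  have hγ0 : 0 < γ := lt_of_lt_of_le one_pos hγ
  have h1 := Bop_norm_le γ hγ ht
  have h2 : t ^ γ * ‖Bop γ hγ t‖ ≤ t ^ γ * (Real.sqrt 5 * (γ / (Real.exp 1 * t)) ^ γ) :=
    mul_le_mul_of_nonneg_left h1 (Real.rpow_nonneg ht.le γ)
  refine h2.trans_eq ?_
  rw [bound_rewrite hγ0 ht]
  have htγ : t ^ γ ≠ 0 := ne_of_gt (Real.rpow_pos_of_pos ht γ)
  rw [Real.rpow_neg ht.le]
  field_simp

lemma limsup_lower (γ : ℝ) (hγ : 1 ≤ γ) :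
    Real.exp (-1) ≤ Filter.limsup (fun t : ℝ => t ^ γ * ‖Bop γ hγ t‖) (𝓝[>] (0:ℝ)) := by
  have hbdd : IsBoundedUnder (· ≤ ·) (𝓝[>] (0:ℝ)) (fun t => t ^ γ * ‖Bop γ hγ t‖) := by
    refine ⟨Real.sqrt 5 * (γ / Real.exp 1) ^ γ, ?_⟩
    rw [eventually_map]
    filter_upwards [self_mem_nhdsWithin] with t ht
    exact tsgBound γ hγ ht
  have key : ∀ n : ℕ, Real.exp (-1 - 1/((n:ℝ)+1)) ≤
      Filter.limsup (fun t : ℝ => t ^ γ * ‖Bop γ hγ t‖) (𝓝[>] (0:ℝ)) := by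
    intro n
    refine le_limsup_of_frequently_le ?_ hbdd
    have htend : Tendsto (fun m : ℕ => 1/((m:ℝ)+1)) atTop (𝓝[>] (0:ℝ)) := by
      rw [tendsto_nhdsWithin_iff]
      exact ⟨tendsto_one_div_add_atTop_nhds_zero_nat,
        Eventually.of_forall (fun m => Set.mem_Ioi.2 (by positivity))⟩
    refine htend.frequently ?_
    refine (eventually_atTop.2 ⟨n, fun m hm => ?_⟩).frequently
    set t : ℝ := 1/((m:ℝ)+1) with htdef
    have htpos : 0 < t := by positivity
    have hm1 : ((m:ℝ)+1) ≠ 0 := by positivity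
    have hlow := le_Bop_norm γ hγ htpos m
    have h3 : t ^ γ * (((m:ℝ) + 1) ^ γ * Real.exp (-(((m:ℝ) + 2) * t))) ≤
        t ^ γ * ‖Bop γ hγ t‖ :=
      mul_le_mul_of_nonneg_left hlow (Real.rpow_nonneg htpos.le γ)
    refine le_trans ?_ h3
    have h4 : t ^ γ * (((m:ℝ) + 1) ^ γ * Real.exp (-(((m:ℝ) + 2) * t))) =
        (t * ((m:ℝ)+1)) ^ γ * Real.exp (-(((m:ℝ) + 2) * t)) := by
      rw [Real.mul_rpow htpos.le (by positivity)]
      ring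
    have h5 : t * ((m:ℝ)+1) = 1 := by
      rw [htdef]; field_simp
    rw [h4, h5, Real.one_rpow, one_mul]
    refine Real.exp_le_exp.2 ?_
    have h6 : ((m:ℝ) + 2) * t = 1 + 1/((m:ℝ)+1) := by
      rw [htdef]; field_simp; ring
    have h7 : 1/((m:ℝ)+1) ≤ 1/((n:ℝ)+1) := by
      refine one_div_le_one_div_of_le (by positivity) ?_
      have : (n:ℝ) ≤ (m:ℝ) := Nat.cast_le.2 hm
      linarith
    rw [h6]
    linarith
  have htend2 : Tendsto (fun n : ℕ => Real.exp (-1 - 1/((n:ℝ)+1))) atTop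
      (𝓝 (Real.exp (-1))) := by
    have h1 : Tendsto (fun n : ℕ => -1 - 1/((n:ℝ)+1)) atTop (𝓝 (-1)) := by
      have := tendsto_one_div_add_atTop_nhds_zero_nat (𝕜 := ℝ)
      have h2 := (tendsto_const_nhds (x := (-1:ℝ)) (f := atTop (α := ℕ))).sub this
      simpa using h2
    exact (Real.continuous_exp.tendsto _).comp h1
  exact le_of_tendsto htend2 (Eventually.of_forall key)



lemma inCP (γ : ℝ) (hγ : 1 ≤ γ) : InCrandallPazy (Tsg γ) (Aop γ) (1/γ) := by
  have hγ0 : 0 < γ := lt_of_lt_of_le one_pos hγ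
  have hM : (0:ℝ) < Real.sqrt 5 * (γ/Real.exp 1)^γ := by
    have h5 : (0:ℝ) < Real.sqrt 5 := Real.sqrt_pos.2 (by norm_num)
    have hq : (0:ℝ) < γ/Real.exp 1 := by positivity
    have := Real.rpow_pos_of_pos hq γ
    positivity
  refine ⟨Bop γ hγ, fun t ht x => ⟨Tsg_mem_domain hγ ht x, Bop_eq_Aop hγ ht x⟩,
    Real.sqrt 5 * (γ/Real.exp 1)^γ, 1, hM, one_pos, ?_⟩
  intro t ht _
  have h1 : -(1/(1/γ)) = -γ := by rw [one_div_one_div]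
  rw [h1]
  calc ‖Bop γ hγ t‖ ≤ Real.sqrt 5 * (γ / (Real.exp 1 * t)) ^ γ := Bop_norm_le γ hγ ht
    _ = Real.sqrt 5 * (γ/Real.exp 1)^γ * t ^ (-γ) := by
        rw [bound_rewrite hγ0 ht, ← mul_assoc]

lemma notCP (γ : ℝ) (hγ : 1 ≤ γ) :
    ∀ β' : ℝ, 1/γ < β' → ¬ InCrandallPazy (Tsg γ) (Aop γ) β' := by
  intro β' hβ'
  rintro ⟨B', h1, M, t₀, hM, ht₀, hb⟩
  have hγ0 : 0 < γ := lt_of_lt_of_le one_pos hγ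
  have hβ'0 : 0 < β' := lt_trans (by positivity) hβ'
  have hc : 1/β' < γ := by
    have := one_div_lt_one_div_of_lt (by positivity : (0:ℝ) < 1/γ) hβ'
    rwa [one_div_one_div] at this
  have hBeq : ∀ t : ℝ, 0 < t → B' t = Bop γ hγ t := by
    intro t ht
    refine ContinuousLinearMap.ext (fun x => ?_)
    obtain ⟨hx, heq⟩ := h1 t ht x
    rw [heq, Bop_eq_Aop hγ ht x]
  have hev : ∀ᶠ t in 𝓝[>] (0:ℝ), t^γ * ‖Bop γ hγ t‖ ≤ M * t^(γ - 1/β') := by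
    filter_upwards [Ioc_mem_nhdsGT_of_mem ⟨le_refl (0:ℝ), ht₀⟩] with t ht
    obtain ⟨ht1, ht2⟩ := ht
    have hble := hb t ht1 ht2
    rw [hBeq t ht1] at hble
    calc t^γ * ‖Bop γ hγ t‖ ≤ t^γ * (M * t^(-(1/β'))) :=
        mul_le_mul_of_nonneg_left hble (Real.rpow_nonneg ht1.le γ)
      _ = M * t^(γ - 1/β') := by
        rw [show γ - 1/β' = γ + -(1/β') by ring, Real.rpow_add ht1]
        ring
  have htend : Tendsto (fun t : ℝ => M * t^(γ - 1/β')) (𝓝[>] (0:ℝ)) (𝓝 0) := by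
    have hc0 : 0 < γ - 1/β' := by linarith
    have h2 : ContinuousAt (fun t : ℝ => t^(γ-1/β')) 0 :=
      Real.continuousAt_rpow_const 0 _ (Or.inr hc0.le)
    have h3 : Tendsto (fun t : ℝ => t^(γ-1/β')) (𝓝[>] (0:ℝ)) (𝓝 0) := by
      have h4 := h2.tendsto
      rw [Real.zero_rpow (ne_of_gt hc0)] at h4
      exact h4.mono_left nhdsWithin_le_nhds
    simpa using h3.const_mul M
  have hev2 : ∀ᶠ t in 𝓝[>] (0:ℝ), t^γ * ‖Bop γ hγ t‖ ≤ Real.exp (-1)/2 := by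
    have hpos : (0:ℝ) < Real.exp (-1)/2 := by positivity
    filter_upwards [hev, htend.eventually_lt_const hpos] with t h1 h2
    exact h1.trans h2.le
  have hcb : IsCoboundedUnder (· ≤ ·) (𝓝[>] (0:ℝ)) (fun t => t^γ * ‖Bop γ hγ t‖) := by
    refine isCoboundedUnder_le_of_eventually_le _ (x := 0) ?_
    filter_upwards [self_mem_nhdsWithin] with t ht
    have ht' : (0:ℝ) < t := ht
    positivity
  have hls := limsup_le_of_le hcb hev2
  have hlow := limsup_lower γ hγ
  have := Real.exp_pos (-1)
  linarith


end CPEx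

/-- The Example of Section 3.4: for `γ ≥ 1`, the diagonal operator
`(A x)_k = (k + i k^γ + 1) x_k` on `ℓ²` (with maximal domain) is such that `-A` generates
the exponentially stable `C₀`-semigroup `(e^{-tA} x)_k = e^{-(k + i k^γ + 1)t} x_k`;
moreover `e^{-tA} ℓ² ⊆ D(A)` for every `t > 0` with
`‖A e^{-tA}‖ ≤ √5 (γ/(e t))^γ`, while `limsup_{t→0+} t^γ ‖A e^{-tA}‖ ≥ e⁻¹`; consequently
the semigroup is in the Crandall–Pazy class with parameter `β = 1/γ` but not with any
larger parameter. -/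
theorem diagonal_example (γ : ℝ) (hγ : 1 ≤ γ) :
    ∃ (A : H2 →ₗ.[ℂ] H2) (T : ℝ → H2 →L[ℂ] H2),
      IsC0Semigroup T ∧ IsGenerator T A ∧
      ((A.domain : Set H2) = {x : H2 | Memℓp (fun j : ℕ => lamE γ j * x j) 2}) ∧
      (∀ x : A.domain, ∀ j : ℕ, (A x) j = lamE γ j * (x : H2) j) ∧
      (∀ t : ℝ, 0 ≤ t → ∀ x : H2, ∀ j : ℕ,
        (T t x) j = Complex.exp (-(lamE γ j) * (t : ℂ)) * x j) ∧
      IsExpStable T ∧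
      ∃ B : ℝ → H2 →L[ℂ] H2,
        (∀ t : ℝ, 0 < t → ∀ x : H2, ∃ hx : T t x ∈ A.domain, B t x = A ⟨T t x, hx⟩) ∧
        (∀ t : ℝ, 0 < t → ‖B t‖ ≤ Real.sqrt 5 * (γ / (Real.exp 1 * t)) ^ γ) ∧
        Real.exp (-1) ≤ Filter.limsup (fun t : ℝ => t ^ γ * ‖B t‖) (𝓝[>] (0 : ℝ)) ∧
        InCrandallPazy T A (1 / γ) ∧
        ∀ β' : ℝ, 1 / γ < β' → ¬ InCrandallPazy T A β' := by

  refine ⟨CPEx.Aop γ, CPEx.Tsg γ, ⟨CPEx.Tsg_zero γ, CPEx.Tsg_add γ, CPEx.Tsg_continuity γ⟩,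
    CPEx.isGen γ, rfl, fun x j => rfl, fun t ht x j => CPEx.Tsg_apply_of_nonneg γ ht x j,
    CPEx.Tsg_expStable γ,
    CPEx.Bop γ hγ, fun t ht x => ⟨CPEx.Tsg_mem_domain hγ ht x, CPEx.Bop_eq_Aop hγ ht x⟩,
    fun t ht => CPEx.Bop_norm_le γ hγ ht, CPEx.limsup_lower γ hγ, CPEx.inCP γ hγ,
    CPEx.notCP γ hγ⟩


end
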